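/- Let M, N ≥ 2, let A be a Hermitian (MN)×(MN) complex matrix, let λ₀ ≤ λ₁ ≤ … ≤ λ_{MN−1} be its eigenvalues listed in nondecreasing order, and let (v₀, …, v_{MN−1}) be a corresponding orthonormal basis of eigenvectors, A v_i = λ_i v_i. Then A is a left or a right entanglement witness if and only if (i) there exists k ∈ {0, 1, …, MN−2} such that the linear span of {v₀, …, v_k} contains no nonzero vector of the form x ⊗ y (x ∈ ℂ^M, y ∈ ℂ^N) and λ_{k+1} > λ_k, or (ii) there exists l ∈ {1, 2, …, MN−1} such that the linear span of {v_l, v_{l+1}, …, v_{MN−1}} contains no nonzero vector of the form x ⊗ y and λ_l > λ_{l−1}. -/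

import Mathlib

open Matrix
open scoped Kronecker ComplexOrder

noncomputable section

/-- `x` is a unit vector in `ℂ^d`. -/
def isUnitVec {d : ℕ} (x : Fin d → ℂ) : Prop := ∑ i, ‖x i‖ ^ 2 = 1

/-- The rank-one projector `x xᴴ`. -/
def outer {d : ℕ} (x : Fin d → ℂ) : Matrix (Fin d) (Fin d) ℂ :=
  Matrix.vecMulVec x (star x)

/-- The set of pure product states `(x xᴴ) ⊗ (y yᴴ)` for unit vectors `x, y`. -/
def pureProduct (M N : ℕ) : Set (Matrix (Fin M × Fin N) (Fin M × Fin N) ℂ) :=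
  {σ | ∃ x : Fin M → ℂ, ∃ y : Fin N → ℂ,
    isUnitVec x ∧ isUnitVec y ∧ σ = outer x ⊗ₖ outer y}

/-- The set of separable states: the convex hull (over ℝ) of the pure product states. -/
def SepStates (M N : ℕ) : Set (Matrix (Fin M × Fin N) (Fin M × Fin N) ℂ) :=
  convexHull ℝ (pureProduct M N)

/-- `ρ` is a density matrix: positive semidefinite with unit trace. -/
def IsDensity {d : Type*} [Fintype d] (ρ : Matrix d d ℂ) : Prop :=
  ρ.PosSemidef ∧ ρ.trace = 1

/-- `A` is a left entanglement witness: for some `a ∈ ℝ`, `tr(Aσ) ≥ a` for all separable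
`σ`, while `tr(Aρ) < a` for some density matrix `ρ`. -/
def IsLeftEW (M N : ℕ) (A : Matrix (Fin M × Fin N) (Fin M × Fin N) ℂ) : Prop :=
  ∃ a : ℝ, (∀ σ ∈ SepStates M N, a ≤ ((A * σ).trace).re) ∧
    ∃ ρ : Matrix (Fin M × Fin N) (Fin M × Fin N) ℂ, IsDensity ρ ∧ ((A * ρ).trace).re < a

/-- `A` is a right entanglement witness: for some `b ∈ ℝ`, `tr(Aσ) ≤ b` for all separable
`σ`, while `tr(Aρ) > b` for some density matrix `ρ`. -/
def IsRightEW (M N : ℕ) (A : Matrix (Fin M × Fin N) (Fin M × Fin N) ℂ) : Prop :=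
  ∃ b : ℝ, (∀ σ ∈ SepStates M N, ((A * σ).trace).re ≤ b) ∧
    ∃ ρ : Matrix (Fin M × Fin N) (Fin M × Fin N) ℂ, IsDensity ρ ∧ b < ((A * ρ).trace).re

/-- `z ∈ ℂ^M ⊗ ℂ^N` is a product vector `x ⊗ y`. -/
def IsProdVec (M N : ℕ) (z : Fin M × Fin N → ℂ) : Prop :=
  ∃ x : Fin M → ℂ, ∃ y : Fin N → ℂ, z = fun ij => x ij.1 * y ij.2

noncomputable section
namespace EWAux

variable {M N : ℕ}

lemma dotProduct_sum' {α : Type*} [Fintype α] {β : Type*} (s : Finset β)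
    (w : α → ℂ) (f : β → α → ℂ) :
    w ⬝ᵥ (∑ i ∈ s, f i) = ∑ i ∈ s, w ⬝ᵥ f i := by
  simp only [dotProduct, Finset.sum_apply, Finset.mul_sum]
  exact Finset.sum_comm

lemma sum_dotProduct' {α : Type*} [Fintype α] {β : Type*} (s : Finset β)
    (w : α → ℂ) (f : β → α → ℂ) :
    (∑ i ∈ s, f i) ⬝ᵥ w = ∑ i ∈ s, f i ⬝ᵥ w := by
  simp only [dotProduct, Finset.sum_apply, Finset.sum_mul]
  exact Finset.sum_comm

section basis

variable (hMN : 0 < M * N) (v : Fin (M * N) → (Fin M × Fin N → ℂ))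
  (horth : ∀ i j, star (v i) ⬝ᵥ v j = if i = j then 1 else 0)

include horth in
lemma coeff_eq {c : Fin (M * N) → ℂ} {z : Fin M × Fin N → ℂ}
    (h : ∑ i, c i • v i = z) (j : Fin (M * N)) : star (v j) ⬝ᵥ z = c j := by
  rw [← h, dotProduct_sum']
  simp only [dotProduct_smul, horth, smul_eq_mul]
  simp [Finset.sum_ite_eq']

include hMN horth in
lemma expand_exists (z : Fin M × Fin N → ℂ) :
    ∃ c : Fin (M * N) → ℂ, ∑ i, c i • v i = z := by
  have : Nonempty (Fin (M * N)) := ⟨⟨0, hMN⟩⟩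
  have hli : LinearIndependent ℂ v := by
    rw [Fintype.linearIndependent_iff]
    intro g hg i
    have := coeff_eq v horth hg i
    simpa using this.symm
  have hcard : Fintype.card (Fin (M * N)) = Module.finrank ℂ (Fin M × Fin N → ℂ) := by
    simp [Module.finrank_fintype_fun_eq_card]
  have hspan := hli.span_eq_top_of_card_eq_finrank hcard
  have hz : z ∈ Submodule.span ℂ (Set.range v) := by rw [hspan]; trivial
  exact (Submodule.mem_span_range_iff_exists_fun ℂ).mp hz

end basis
end EWAux

noncomputable section
namespace EWAux2
open EWAux

lemma conj_mul_self (a : ℂ) : (starRingEnd ℂ) a * a = ((‖a‖ : ℝ) : ℂ)^2 := by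
  rw [mul_comm, Complex.mul_conj, Complex.normSq_eq_norm_sq]
  push_cast; ring

lemma star_dot_self {d : Type*} [Fintype d] (z : d → ℂ) :
    star z ⬝ᵥ z = ((∑ p, ‖z p‖^2 : ℝ) : ℂ) := by
  simp only [dotProduct, Pi.star_apply, RCLike.star_def]
  push_cast
  exact Finset.sum_congr rfl fun p _ => conj_mul_self (z p)

variable {M N : ℕ} {v : Fin (M * N) → (Fin M × Fin N → ℂ)}
  (horth : ∀ i j, star (v i) ⬝ᵥ v j = if i = j then 1 else 0)

lemma mulVec_sum' {α β : Type*} [Fintype β] (s : Finset α) (A : Matrix (Fin M × Fin N) β ℂ)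
    (f : α → β → ℂ) : A *ᵥ (∑ i ∈ s, f i) = ∑ i ∈ s, A *ᵥ f i := by
  funext p
  simp only [Matrix.mulVec, Finset.sum_apply]
  exact dotProduct_sum' s _ f

include horth in
lemma norm_expand {c : Fin (M * N) → ℂ} {z : Fin M × Fin N → ℂ}
    (h : ∑ i, c i • v i = z) :
    star z ⬝ᵥ z = ((∑ i, ‖c i‖^2 : ℝ) : ℂ) := by
  conv_lhs => rw [← h]
  rw [show star (∑ i, c i • v i) = ∑ i, (starRingEnd ℂ) (c i) • star (v i) by
    simp [star_sum, star_smul]]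
  rw [sum_dotProduct']
  push_cast
  refine Finset.sum_congr rfl fun i _ => ?_
  rw [smul_dotProduct, h, coeff_eq v horth h i, smul_eq_mul, conj_mul_self]

variable {A : Matrix (Fin M × Fin N) (Fin M × Fin N) ℂ} {lam : Fin (M * N) → ℝ}
  (heig : ∀ i, A.mulVec (v i) = (lam i : ℂ) • v i)

include horth heig in
lemma quad_expand {c : Fin (M * N) → ℂ} {z : Fin M × Fin N → ℂ}
    (h : ∑ i, c i • v i = z) :
    star z ⬝ᵥ A.mulVec z = ((∑ i, lam i * ‖c i‖^2 : ℝ) : ℂ) := by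
  conv_lhs => rw [← h, mulVec_sum']
  simp only [Matrix.mulVec_smul, heig]
  rw [dotProduct_sum']
  push_cast
  refine Finset.sum_congr rfl fun i _ => ?_
  rw [smul_comm, dotProduct_smul, dotProduct_smul, star_dotProduct, h,
    coeff_eq v horth h i]
  simp only [smul_eq_mul, RCLike.star_def]
  rw [← conj_mul_self (c i)]; ring

end EWAux2

end

noncomputable section
namespace EWAux3
open EWAux EWAux2

variable {M N : ℕ}

/-- rank-one matrix on the product space -/
def pout (z : Fin M × Fin N → ℂ) : Matrix (Fin M × Fin N) (Fin M × Fin N) ℂ :=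
  Matrix.vecMulVec z (star z)

lemma trace_mul_pout (A : Matrix (Fin M × Fin N) (Fin M × Fin N) ℂ) (z : Fin M × Fin N → ℂ) :
    (A * pout z).trace = star z ⬝ᵥ A *ᵥ z := by
  simp only [Matrix.trace, Matrix.diag, Matrix.mul_apply, pout, Matrix.vecMulVec_apply,
    dotProduct, Matrix.mulVec, Pi.star_apply, Finset.mul_sum]
  exact Finset.sum_congr rfl fun p _ => Finset.sum_congr rfl fun q _ => by ring

lemma kron_outer_eq (x : Fin M → ℂ) (y : Fin N → ℂ) :
    outer x ⊗ₖ outer y = pout (fun ij => x ij.1 * y ij.2) := by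
  ext ⟨i,j⟩ ⟨k,l⟩
  simp [outer, pout, Matrix.kroneckerMap_apply, Matrix.vecMulVec_apply]
  ring

lemma prodvec_unit {x : Fin M → ℂ} {y : Fin N → ℂ} (hx : isUnitVec x) (hy : isUnitVec y) :
    ∑ p : Fin M × Fin N, ‖x p.1 * y p.2‖^2 = 1 := by
  rw [Fintype.sum_prod_type]
  simp only [norm_mul, mul_pow]
  rw [← Finset.sum_mul_sum]
  rw [hx, hy]
  norm_num

lemma pout_trace (z : Fin M × Fin N → ℂ) : (pout z).trace = star z ⬝ᵥ z := by
  simp only [Matrix.trace, Matrix.diag, pout, Matrix.vecMulVec_apply, dotProduct, Pi.star_apply]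
  exact Finset.sum_congr rfl fun p _ => by ring

lemma pout_posSemidef (z : Fin M × Fin N → ℂ) : (pout z).PosSemidef := by
  refine Matrix.PosSemidef.of_dotProduct_mulVec_nonneg ?_ ?_
  · ext p q
    simp [pout, Matrix.conjTranspose_apply, Matrix.vecMulVec_apply, mul_comm]
  · intro w
    have hmv : (pout z) *ᵥ w = (star z ⬝ᵥ w) • z := by
      funext p
      simp [pout, Matrix.mulVec, Matrix.vecMulVec_apply, dotProduct, Finset.sum_mul]
      exact Finset.sum_congr rfl fun q _ => by ring
    rw [hmv, dotProduct_smul, smul_eq_mul, star_dotProduct w z, mul_comm,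
      RCLike.star_def, conj_mul_self, ← Complex.ofReal_pow, Complex.zero_le_real]
    positivity
lemma pout_density {z : Fin M × Fin N → ℂ} (hz : ∑ p, ‖z p‖^2 = 1) : IsDensity (pout z) := by
  refine ⟨pout_posSemidef z, ?_⟩
  rw [pout_trace, star_dot_self, hz]
  norm_num

end EWAux3
end

noncomputable section
namespace EWAux4
open EWAux EWAux2 EWAux3

lemma psd_diag_nonneg' {d : Type*} [Fintype d] [DecidableEq d] {C : Matrix d d ℂ}
    (hC : C.PosSemidef) (i : d) : 0 ≤ C i i := by
  have := hC.dotProduct_mulVec_nonneg (Pi.single i 1)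
  simpa [dotProduct, Matrix.mulVec, Pi.single_apply, Finset.sum_ite_eq',
    Finset.sum_ite_eq] using this

lemma trace_mul_psd_nonneg {d : Type*} [Fintype d] [DecidableEq d] {B ρ : Matrix d d ℂ}
    (hB : B.PosSemidef) (hρ : ρ.PosSemidef) : 0 ≤ ((B * ρ).trace).re := by
  open scoped MatrixOrder in
  obtain ⟨S, rfl⟩ := CStarAlgebra.nonneg_iff_eq_star_mul_self.mp hρ.nonneg
  have h2 : (B * (star S * S)).trace = (S * B * Sᴴ).trace := by
    rw [star_eq_conjTranspose, ← Matrix.mul_assoc, Matrix.trace_mul_comm, ← Matrix.mul_assoc]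
  have h3 : (S * B * Sᴴ).PosSemidef := hB.mul_mul_conjTranspose_same S
  have h4 : (0:ℂ) ≤ (S * B * Sᴴ).trace :=
    Finset.sum_nonneg (fun i _ => psd_diag_nonneg' h3 i)
  rw [h2]
  exact (Complex.le_def.mp h4).1

variable {M N : ℕ}

lemma sep_bound {A : Matrix (Fin M × Fin N) (Fin M × Fin N) ℂ} {a : ℝ}
    (h : ∀ σ ∈ pureProduct M N, a ≤ ((A * σ).trace).re) :
    ∀ σ ∈ SepStates M N, a ≤ ((A * σ).trace).re := by
  intro σ hσ
  have hconv : Convex ℝ {σ : Matrix (Fin M × Fin N) (Fin M × Fin N) ℂ |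
      a ≤ ((A * σ).trace).re} := by
    intro σ₁ h1 σ₂ h2 t s ht hs hts
    simp only [Set.mem_setOf_eq] at h1 h2 ⊢
    rw [Matrix.mul_add, Matrix.mul_smul, Matrix.mul_smul, Matrix.trace_add,
      Matrix.trace_smul, Matrix.trace_smul, Complex.add_re, Complex.smul_re,
      Complex.smul_re]
    have := mul_le_mul_of_nonneg_left h1 ht
    have := mul_le_mul_of_nonneg_left h2 hs
    simp only [smul_eq_mul]
    calc a = t*a + s*a := by rw [← add_mul, hts, one_mul]
    _ ≤ t * ((A * σ₁).trace).re + s * ((A * σ₂).trace).re := add_le_add ‹_› ‹_›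
  exact convexHull_min h hconv hσ

variable {A : Matrix (Fin M × Fin N) (Fin M × Fin N) ℂ} (hA : A.IsHermitian)
  {lam : Fin (M * N) → ℝ} (hmono : Monotone lam)
  {v : Fin (M * N) → (Fin M × Fin N → ℂ)}
  (horth : ∀ i j, star (v i) ⬝ᵥ v j = if i = j then 1 else 0)
  (heig : ∀ i, A.mulVec (v i) = (lam i : ℂ) • v i)
  (hpos : 0 < M * N)

include hA hmono horth heig hpos in
lemma shifted_psd : (A - ((lam ⟨0, hpos⟩ : ℝ) : ℂ) • 1).PosSemidef := by
  set lam0 : ℝ := lam ⟨0, hpos⟩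
  refine Matrix.PosSemidef.of_dotProduct_mulVec_nonneg ?_ ?_
  · have h1 : (((lam0 : ℝ) : ℂ) • (1 : Matrix (Fin M × Fin N) (Fin M × Fin N) ℂ)).IsHermitian := by
      unfold Matrix.IsHermitian
      rw [Matrix.conjTranspose_smul, Matrix.conjTranspose_one, RCLike.star_def,
        Complex.conj_ofReal]
    exact hA.sub h1
  · intro w
    obtain ⟨c, hc⟩ := expand_exists hpos v horth w
    rw [Matrix.sub_mulVec, dotProduct_sub, Matrix.smul_mulVec,
      Matrix.one_mulVec, dotProduct_smul, quad_expand horth heig hc,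
      norm_expand horth hc]
    have : ((∑ i, lam i * ‖c i‖^2 : ℝ) : ℂ) - ((lam0 : ℝ) : ℂ) • ((∑ i, ‖c i‖^2 : ℝ) : ℂ)
        = ((∑ i, (lam i - lam0) * ‖c i‖^2 : ℝ) : ℂ) := by
      push_cast [Finset.sum_sub_distrib, sub_mul, Finset.mul_sum]
      rw [smul_eq_mul, Finset.mul_sum]
    rw [this, Complex.zero_le_real]
    refine Finset.sum_nonneg fun i _ => ?_
    have h5 : lam0 ≤ lam i := hmono (by simp [Fin.le_def])
    exact mul_nonneg (by linarith) (by positivity)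

include hA hmono horth heig hpos in
lemma density_lb {ρ : Matrix (Fin M × Fin N) (Fin M × Fin N) ℂ} (hρ : IsDensity ρ) :
    lam ⟨0, hpos⟩ ≤ ((A * ρ).trace).re := by
  set lam0 : ℝ := lam ⟨0, hpos⟩ with hlam0
  set B : Matrix (Fin M × Fin N) (Fin M × Fin N) ℂ := A - ((lam0 : ℝ) : ℂ) • 1 with hB
  have hBpsd : B.PosSemidef := shifted_psd hA hmono horth heig hpos
  have hsplit : A * ρ = B * ρ + ((lam0 : ℝ) : ℂ) • ρ := by
    rw [hB, Matrix.sub_mul, Matrix.smul_mul, Matrix.one_mul]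
    abel
  have htr : ((A * ρ).trace).re = ((B * ρ).trace).re + lam0 := by
    rw [hsplit, Matrix.trace_add, Matrix.trace_smul, Complex.add_re, hρ.2]
    simp
  rw [htr]
  have := trace_mul_psd_nonneg hBpsd hρ.1
  linarith

end EWAux4
end

noncomputable section
namespace EWAux5
open EWAux EWAux2 EWAux3

variable {M N : ℕ}

lemma prod_norm_sum (x : Fin M → ℂ) (y : Fin N → ℂ) :
    ∑ p : Fin M × Fin N, ‖x p.1 * y p.2‖^2 = (∑ i, ‖x i‖^2) * (∑ j, ‖y j‖^2) := by
  rw [Fintype.sum_prod_type, Finset.sum_mul_sum]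
  simp [norm_mul, mul_pow]

lemma key_scale {z : Fin M × Fin N → ℂ} (hz : IsProdVec M N z) (h0 : z ≠ 0) :
    ∃ x : Fin M → ℂ, ∃ y : Fin N → ℂ, isUnitVec x ∧ isUnitVec y ∧
      ∃ t : ℝ, 0 < t ∧ t^2 = ∑ p, ‖z p‖^2 ∧
        z = ((t : ℝ) : ℂ) • (fun ij => x ij.1 * y ij.2) := by
  obtain ⟨x0, y0, rfl⟩ := hz
  have hx0 : x0 ≠ 0 := by
    rintro rfl; exact h0 (by funext ij; simp)
  have hy0 : y0 ≠ 0 := by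
    rintro rfl; exact h0 (by funext ij; simp)
  obtain ⟨i0, hi0⟩ := Function.ne_iff.mp hx0
  obtain ⟨j0, hj0⟩ := Function.ne_iff.mp hy0
  have hxs : 0 < ∑ i, ‖x0 i‖^2 :=
    Finset.sum_pos' (fun i _ => by positivity)
      ⟨i0, Finset.mem_univ _, by simpa using pow_pos (norm_pos_iff.mpr hi0) 2⟩
  have hys : 0 < ∑ j, ‖y0 j‖^2 :=
    Finset.sum_pos' (fun j _ => by positivity)
      ⟨j0, Finset.mem_univ _, by simpa using pow_pos (norm_pos_iff.mpr hj0) 2⟩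
  set nx := Real.sqrt (∑ i, ‖x0 i‖^2) with hnx
  set ny := Real.sqrt (∑ j, ‖y0 j‖^2) with hny
  have hnxp : 0 < nx := Real.sqrt_pos.mpr hxs
  have hnyp : 0 < ny := Real.sqrt_pos.mpr hys
  have hnx2 : nx^2 = ∑ i, ‖x0 i‖^2 := Real.sq_sqrt hxs.le
  have hny2 : ny^2 = ∑ j, ‖y0 j‖^2 := Real.sq_sqrt hys.le
  refine ⟨fun i => ((nx : ℝ) : ℂ)⁻¹ * x0 i, fun j => ((ny : ℝ) : ℂ)⁻¹ * y0 j, ?_, ?_,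
    nx * ny, mul_pos hnxp hnyp, ?_, ?_⟩
  · show ∑ i, ‖((nx : ℝ) : ℂ)⁻¹ * x0 i‖^2 = 1
    simp only [norm_mul, mul_pow, norm_inv, Complex.norm_real, Real.norm_eq_abs,
      abs_of_pos hnxp, ← Finset.mul_sum]
    rw [inv_pow, hnx2, inv_mul_cancel₀ (ne_of_gt hxs)]
  · show ∑ j, ‖((ny : ℝ) : ℂ)⁻¹ * y0 j‖^2 = 1
    simp only [norm_mul, mul_pow, norm_inv, Complex.norm_real, Real.norm_eq_abs,
      abs_of_pos hnyp, ← Finset.mul_sum]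
    rw [inv_pow, hny2, inv_mul_cancel₀ (ne_of_gt hys)]
  · rw [prod_norm_sum, ← hnx2, ← hny2]; ring
  · funext ij
    have h1 : ((nx : ℝ) : ℂ) ≠ 0 := Complex.ofReal_ne_zero.mpr (ne_of_gt hnxp)
    have h2 : ((ny : ℝ) : ℂ) ≠ 0 := Complex.ofReal_ne_zero.mpr (ne_of_gt hnyp)
    simp only [Pi.smul_apply, smul_eq_mul]
    push_cast
    field_simp

lemma q_smul (A : Matrix (Fin M × Fin N) (Fin M × Fin N) ℂ) (t : ℝ) (w : Fin M × Fin N → ℂ) :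
    (star (((t : ℝ) : ℂ) • w) ⬝ᵥ A *ᵥ (((t : ℝ) : ℂ) • w)).re
      = t^2 * (star w ⬝ᵥ A *ᵥ w).re := by
  rw [star_smul, Matrix.mulVec_smul, smul_dotProduct, dotProduct_smul]
  simp only [RCLike.star_def, Complex.conj_ofReal, smul_eq_mul]
  rw [← mul_assoc, ← Complex.ofReal_mul, Complex.re_ofReal_mul]
  ring

lemma exists_min (hM : 0 < M) (hN : 0 < N) (A : Matrix (Fin M × Fin N) (Fin M × Fin N) ℂ) :
    ∃ z₀ : Fin M × Fin N → ℂ, ((∑ p, ‖z₀ p‖^2) = 1 ∧ IsProdVec M N z₀) ∧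
      ∀ z : Fin M × Fin N → ℂ, (∑ p, ‖z p‖^2) = 1 → IsProdVec M N z →
        (star z₀ ⬝ᵥ A *ᵥ z₀).re ≤ (star z ⬝ᵥ A *ᵥ z).re := by
  classical
  set SX : Set (Fin M → ℂ) := {x | ∑ i, ‖x i‖^2 = 1} with hSX
  set SY : Set (Fin N → ℂ) := {y | ∑ j, ‖y j‖^2 = 1} with hSY
  have hcont1 : Continuous fun x : Fin M → ℂ => ∑ i, ‖x i‖^2 :=
    continuous_finset_sum _ fun i _ => ((continuous_apply i).norm.pow 2)
  have hcont2 : Continuous fun y : Fin N → ℂ => ∑ j, ‖y j‖^2 :=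
    continuous_finset_sum _ fun j _ => ((continuous_apply j).norm.pow 2)
  have hb : ∀ (d : ℕ) (x : Fin d → ℂ), (∑ i, ‖x i‖^2 = 1) → x ∈ Metric.closedBall 0 1 := by
    intro d x hx
    rw [Metric.mem_closedBall, dist_zero_right]
    by_cases hd : Nonempty (Fin d)
    · rw [pi_norm_le_iff_of_nonneg zero_le_one]
      intro i
      have h1 : ‖x i‖^2 ≤ 1 := by
        rw [← hx]
        exact Finset.single_le_sum (f := fun j => ‖x j‖^2) (fun j _ => by positivity)
          (Finset.mem_univ i)
      nlinarith [norm_nonneg (x i)]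
    · simp only [not_nonempty_iff] at hd
      exfalso
      haveI := hd
      rw [Finset.univ_eq_empty] at hx
      simp at hx
  have hcX : IsCompact SX :=
    Metric.isCompact_of_isClosed_isBounded (isClosed_eq hcont1 continuous_const)
      (Bornology.IsBounded.subset Metric.isBounded_closedBall (fun x hx => hb M x hx))
  have hcY : IsCompact SY :=
    Metric.isCompact_of_isClosed_isBounded (isClosed_eq hcont2 continuous_const)
      (Bornology.IsBounded.subset Metric.isBounded_closedBall (fun y hy => hb N y hy))
  set g : ((Fin M → ℂ) × (Fin N → ℂ)) → (Fin M × Fin N → ℂ) :=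
    fun p ij => p.1 ij.1 * p.2 ij.2 with hg
  have hgc : Continuous g :=
    continuous_pi fun ij => (((continuous_apply ij.1).comp continuous_fst).mul
      ((continuous_apply ij.2).comp continuous_snd))
  set K : Set (Fin M × Fin N → ℂ) := g '' (SX ×ˢ SY) with hK
  have hKc : IsCompact K := (hcX.prod hcY).image hgc
  have hx1 : (Pi.single ⟨0, hM⟩ 1 : Fin M → ℂ) ∈ SX := by
    simp only [hSX, Set.mem_setOf_eq, Pi.single_apply]
    rw [Finset.sum_eq_single ⟨0, hM⟩] <;> simp
  have hy1 : (Pi.single ⟨0, hN⟩ 1 : Fin N → ℂ) ∈ SY := by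
    simp only [hSY, Set.mem_setOf_eq, Pi.single_apply]
    rw [Finset.sum_eq_single ⟨0, hN⟩] <;> simp
  have hKne : K.Nonempty := ⟨g (_, _), Set.mem_image_of_mem g (Set.mk_mem_prod hx1 hy1)⟩
  have hfc : Continuous fun z : Fin M × Fin N → ℂ => (star z ⬝ᵥ A *ᵥ z).re := by
    apply Complex.continuous_re.comp
    show Continuous fun z : Fin M × Fin N → ℂ => ∑ p, star z p * (∑ q, A p q * z q)
    refine continuous_finset_sum _ fun p _ => Continuous.mul ?_ ?_
    · exact Complex.continuous_conj.comp (continuous_apply p)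
    · exact continuous_finset_sum _ fun q _ => continuous_const.mul (continuous_apply q)
  obtain ⟨z₀, hz₀K, hmin⟩ := hKc.exists_isMinOn hKne hfc.continuousOn
  have hmem_iff : ∀ z : Fin M × Fin N → ℂ, z ∈ K ↔ ((∑ p, ‖z p‖^2) = 1 ∧ IsProdVec M N z) := by
    intro z
    constructor
    · rintro ⟨⟨x, y⟩, ⟨hx, hy⟩, rfl⟩
      exact ⟨by rw [show (∑ p, ‖g (x,y) p‖^2) = _ from prod_norm_sum x y, hx, hy, mul_one],
        ⟨x, y, rfl⟩⟩
    · rintro ⟨hone, hprod⟩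
      have h0 : z ≠ 0 := by
        rintro rfl
        simp at hone
      obtain ⟨x, y, hux, huy, t, htp, ht2, hzt⟩ := key_scale hprod h0
      have ht1 : t = 1 := by
        rw [hone] at ht2
        nlinarith
      refine ⟨(x, y), Set.mk_mem_prod hux huy, ?_⟩
      rw [hzt, ht1]
      funext ij
      simp [hg]
  refine ⟨z₀, (hmem_iff z₀).mp hz₀K, fun z h1 h2 => ?_⟩
  exact hmin ((hmem_iff z).mpr ⟨h1, h2⟩)

end EWAux5
end

noncomputable section
namespace EWAux6
open EWAux EWAux2 EWAux3

variable {M N : ℕ} {v : Fin (M * N) → (Fin M × Fin N → ℂ)}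
  (horth : ∀ i j, star (v i) ⬝ᵥ v j = if i = j then 1 else 0)

include horth in
lemma span_coeff_zero {P : Set (Fin (M * N))} {z : Fin M × Fin N → ℂ}
    (hz : z ∈ Submodule.span ℂ (v '' P)) {j : Fin (M * N)} (hj : j ∉ P) :
    star (v j) ⬝ᵥ z = 0 := by
  induction hz using Submodule.span_induction with
  | mem w hw =>
    obtain ⟨i, hi, rfl⟩ := hw
    rw [horth]
    simp only [ite_eq_right_iff]
    intro h
    exact absurd (h ▸ hi) hj
  | zero => simp [dotProduct]
  | add w₁ w₂ _ _ h1 h2 => rw [dotProduct_add, h1, h2, add_zero]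
  | smul c w _ h => rw [dotProduct_smul, h, smul_zero]

lemma coeff_zero_span {P : Set (Fin (M * N))} {c : Fin (M * N) → ℂ} {z : Fin M × Fin N → ℂ}
    (hc : ∑ i, c i • v i = z) (h : ∀ j, j ∉ P → c j = 0) :
    z ∈ Submodule.span ℂ (v '' P) := by
  classical
  rw [← hc]
  refine Submodule.sum_mem _ fun i _ => ?_
  by_cases hi : i ∈ P
  · exact Submodule.smul_mem _ _ (Submodule.subset_span ⟨i, hi, rfl⟩)
  · rw [h i hi, zero_smul]
    exact Submodule.zero_mem _

end EWAux6
end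

noncomputable section
namespace EWMain
open EWAux EWAux2 EWAux3 EWAux4 EWAux5 EWAux6

variable {M N : ℕ}

lemma isUnitVec_single {d : ℕ} (i0 : Fin d) : isUnitVec (Pi.single i0 (1:ℂ)) := by
  unfold isUnitVec
  rw [Finset.sum_eq_single i0]
  · simp
  · intro b _ hb
    simp [Pi.single_apply, hb]
  · simp

variable {A : Matrix (Fin M × Fin N) (Fin M × Fin N) ℂ}
  {lam : Fin (M * N) → ℝ} {v : Fin (M * N) → (Fin M × Fin N → ℂ)}
  (horth : ∀ i j, star (v i) ⬝ᵥ v j = if i = j then 1 else 0)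
  (heig : ∀ i, A.mulVec (v i) = (lam i : ℂ) • v i)

include horth in
lemma coeff_norm_sum {c : Fin (M * N) → ℂ} {z : Fin M × Fin N → ℂ}
    (hc : ∑ i, c i • v i = z) : ∑ i, ‖c i‖^2 = ∑ p, ‖z p‖^2 := by
  have h1 := norm_expand horth hc
  have h2 := star_dot_self z
  rw [h1] at h2
  exact_mod_cast h2

include horth heig in
lemma q_re {c : Fin (M * N) → ℂ} {z : Fin M × Fin N → ℂ}
    (hc : ∑ i, c i • v i = z) :
    (star z ⬝ᵥ A *ᵥ z).re = ∑ i, lam i * ‖c i‖^2 := by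
  rw [quad_expand horth heig hc]
  exact Complex.ofReal_re _

include horth heig in
lemma q_const (hpos : 0 < M * N) {lam0 : ℝ} {z : Fin M × Fin N → ℂ}
    (h : ∀ i, star (v i) ⬝ᵥ z ≠ 0 → lam i = lam0) :
    (star z ⬝ᵥ A *ᵥ z).re = lam0 * (∑ p, ‖z p‖^2) := by
  obtain ⟨c, hc⟩ := expand_exists hpos v horth z
  rw [q_re horth heig hc, ← coeff_norm_sum horth hc, Finset.mul_sum]
  refine Finset.sum_congr rfl fun i _ => ?_
  by_cases h0 : c i = 0
  · simp [h0]
  · rw [h i (by rw [coeff_eq v horth hc i]; exact h0)]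

include horth heig in
theorem leftEW_iff (hM : 2 ≤ M) (hN : 2 ≤ N) (hA : A.IsHermitian)
    (hmono : Monotone lam) :
    IsLeftEW M N A ↔
      (∃ k : ℕ, ∃ hk : k + 1 < M * N,
        (∀ z ∈ Submodule.span ℂ (v '' {i : Fin (M * N) | (i : ℕ) ≤ k}),
            IsProdVec M N z → z = 0) ∧
        lam ⟨k, Nat.lt_of_succ_lt hk⟩ < lam ⟨k + 1, hk⟩) := by
  classical
  have hpos : 0 < M * N := Nat.mul_pos (by omega) (by omega)
  set lam0 := lam ⟨0, hpos⟩ with hlam0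
  have htr : ∀ x : Fin M → ℂ, ∀ y : Fin N → ℂ,
      (A * (outer x ⊗ₖ outer y)).trace
        = star (fun ij => x ij.1 * y ij.2 : Fin M × Fin N → ℂ) ⬝ᵥ
            A *ᵥ (fun ij => x ij.1 * y ij.2) := by
    intro x y
    rw [kron_outer_eq, trace_mul_pout]
  constructor
  · rintro ⟨a, hsep, ρ, hρ, hlt⟩
    have halam : lam0 < a :=
      lt_of_le_of_lt (density_lb hA hmono horth heig hpos hρ) hlt
    -- scaled bound on product vectors
    have hq : ∀ z : Fin M × Fin N → ℂ, IsProdVec M N z →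
        a * (∑ p, ‖z p‖^2) ≤ (star z ⬝ᵥ A *ᵥ z).re := by
      intro z hz
      by_cases h0 : z = 0
      · subst h0
        simp [dotProduct]
      · obtain ⟨x, y, hux, huy, t, htp, ht2, hzt⟩ := key_scale hz h0
        have hw := hsep (outer x ⊗ₖ outer y)
          (subset_convexHull ℝ _ ⟨x, y, hux, huy, rfl⟩)
        rw [htr x y] at hw
        have hqs := q_smul A t (fun ij => x ij.1 * y ij.2)
        rw [← hzt] at hqs
        rw [hqs, ← ht2]
        nlinarith [sq_nonneg t]
    set D : Finset (Fin (M * N)) := Finset.univ.filter (fun j => lam j = lam0) with hD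
    have hD0 : (⟨0, hpos⟩ : Fin (M * N)) ∈ D :=
      Finset.mem_filter.mpr ⟨Finset.mem_univ _, rfl⟩
    have hDne : D.Nonempty := ⟨_, hD0⟩
    set k : Fin (M * N) := D.max' hDne with hkdef
    have hklam : lam k = lam0 := (Finset.mem_filter.mp (D.max'_mem hDne)).2
    -- a unit product vector exists
    have hMpos : (0:ℕ) < M := by omega
    have hNpos : (0:ℕ) < N := by omega
    set z1 : Fin M × Fin N → ℂ :=
      fun ij => (Pi.single (⟨0, hMpos⟩ : Fin M) (1:ℂ) : Fin M → ℂ) ij.1 *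
        (Pi.single (⟨0, hNpos⟩ : Fin N) (1:ℂ) : Fin N → ℂ) ij.2 with hz1
    have hz1u : ∑ p, ‖z1 p‖^2 = 1 :=
      prodvec_unit (isUnitVec_single _) (isUnitVec_single _)
    have hz1p : IsProdVec M N z1 := ⟨_, _, rfl⟩
    have hkups : (k : ℕ) + 1 < M * N := by
      by_contra hcon
      have hktop : (k : ℕ) = M * N - 1 := by have := k.isLt; omega
      have hall : ∀ j : Fin (M * N), lam j = lam0 := by
        intro j
        have h1 : lam0 ≤ lam j := hmono (by simp [Fin.le_def])
        have h2 : lam j ≤ lam k := hmono (Fin.le_def.mpr (by have := j.isLt; omega))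
        rw [hklam] at h2
        linarith
      have hq1 := hq z1 hz1p
      rw [hz1u, mul_one, q_const horth heig hpos (fun i _ => hall i), hz1u, mul_one] at hq1
      linarith
    refine ⟨(k : ℕ), hkups, ?_, ?_⟩
    · intro z hzspan hzprod
      by_contra hz0
      have hcz : ∀ i : Fin (M * N), star (v i) ⬝ᵥ z ≠ 0 → lam i = lam0 := by
        intro i hi
        have hik : (i : ℕ) ≤ (k : ℕ) := by
          by_contra hik
          exact hi (span_coeff_zero horth hzspan (by simpa using hik))
        have h2 : lam i ≤ lam k := hmono (Fin.le_def.mpr hik)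
        have h1 : lam0 ≤ lam i := hmono (by simp [Fin.le_def])
        rw [hklam] at h2
        linarith
      have hqz := hq z hzprod
      rw [q_const horth heig hpos hcz] at hqz
      have hzs : 0 < ∑ p, ‖z p‖^2 := by
        obtain ⟨p, hp⟩ := Function.ne_iff.mp hz0
        exact Finset.sum_pos' (fun q _ => by positivity)
          ⟨p, Finset.mem_univ _, by simpa using pow_pos (norm_pos_iff.mpr hp) 2⟩
      nlinarith
    · have hne : lam ⟨(k : ℕ) + 1, hkups⟩ ≠ lam0 := by
        intro hcon
        have hmem : (⟨(k : ℕ) + 1, hkups⟩ : Fin (M * N)) ∈ D :=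
          Finset.mem_filter.mpr ⟨Finset.mem_univ _, hcon⟩
        have h9 := Fin.le_def.mp (D.le_max' _ hmem)
        rw [← hkdef] at h9
        simp at h9
      have hle : lam ⟨(k : ℕ), by omega⟩ ≤ lam ⟨(k : ℕ) + 1, hkups⟩ :=
        hmono (by simp [Fin.le_def])
      have hkk : (⟨(k : ℕ), by omega⟩ : Fin (M * N)) = k := by
        apply Fin.ext; rfl
      rcases lt_or_eq_of_le hle with h | h
      · exact h
      · exfalso
        apply hne
        rw [← h, hkk, hklam]
  · rintro ⟨k, hk, hspan, hgap⟩
    obtain ⟨z₀, ⟨hz₀u, hz₀p⟩, hmin⟩ := exists_min (by omega) (by omega) A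
    set a : ℝ := (star z₀ ⬝ᵥ A *ᵥ z₀).re with ha
    have halam : lam0 < a := by
      by_contra hcon
      push_neg at hcon
      obtain ⟨c, hc⟩ := expand_exists hpos v horth z₀
      have hqz := q_re horth heig hc
      have hcs : ∑ i, ‖c i‖^2 = 1 := by rw [coeff_norm_sum horth hc, hz₀u]
      have hsum0 : ∑ i, (lam i - lam0) * ‖c i‖^2 ≤ 0 := by
        have hexp : ∑ i, (lam i - lam0) * ‖c i‖^2
            = (∑ i, lam i * ‖c i‖^2) - ∑ i, lam0 * ‖c i‖^2 := by
          rw [← Finset.sum_sub_distrib]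
          exact Finset.sum_congr rfl fun i _ => by ring
        have h2 : ∑ i, lam0 * ‖c i‖^2 = lam0 := by rw [← Finset.mul_sum, hcs, mul_one]
        rw [hexp, h2, ← hqz, ← ha]
        linarith
      have hterm : ∀ i ∈ Finset.univ, (lam i - lam0) * ‖c i‖^2 = 0 := by
        rw [← Finset.sum_eq_zero_iff_of_nonneg
          (fun i _ => mul_nonneg (sub_nonneg.mpr (hmono (by simp [Fin.le_def])))
            (by positivity))]
        have h0le : (0:ℝ) ≤ ∑ i, (lam i - lam0) * ‖c i‖^2 :=
          Finset.sum_nonneg fun i _ => mul_nonneg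
            (sub_nonneg.mpr (hmono (by simp [Fin.le_def]))) (by positivity)
        linarith
      have hcz : ∀ j : Fin (M * N), ¬ ((j : ℕ) ≤ k) → c j = 0 := by
        intro j hj
        have hjk : k + 1 ≤ (j : ℕ) := by omega
        have h1 : lam ⟨k + 1, hk⟩ ≤ lam j := hmono (by simp [Fin.le_def]; omega)
        have h2 : lam0 ≤ lam ⟨k, by omega⟩ := hmono (by simp [Fin.le_def])
        have h3 : 0 < lam j - lam0 := by linarith
        have := hterm j (Finset.mem_univ j)
        have hcj2 : ‖c j‖^2 = 0 := by
          by_contra hc2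
          have : 0 < ‖c j‖^2 := lt_of_le_of_ne (by positivity) (Ne.symm hc2)
          nlinarith
        simpa using pow_eq_zero_iff (n := 2) (by norm_num) |>.mp hcj2
      have hzmem : z₀ ∈ Submodule.span ℂ (v '' {i : Fin (M * N) | (i : ℕ) ≤ k}) :=
        coeff_zero_span hc hcz
      have := hspan z₀ hzmem hz₀p
      rw [this] at hz₀u
      simp at hz₀u
    refine ⟨a, ?_, pout (v ⟨0, hpos⟩), ?_, ?_⟩
    · apply sep_bound
      rintro σ ⟨x, y, hux, huy, rfl⟩
      rw [htr x y]
      exact hmin _ (prodvec_unit hux huy) ⟨x, y, rfl⟩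
    · apply pout_density
      have h1 := horth ⟨0, hpos⟩ ⟨0, hpos⟩
      rw [if_pos rfl, star_dot_self] at h1
      exact_mod_cast h1
    · rw [trace_mul_pout, heig, dotProduct_smul]
      have h1 := horth ⟨0, hpos⟩ ⟨0, hpos⟩
      rw [if_pos rfl] at h1
      rw [h1, smul_eq_mul, mul_one]
      simpa using halam

end EWMain
end

noncomputable section
namespace EWFinal
open EWAux EWAux2 EWAux3 EWAux4 EWAux5 EWAux6 EWMain

variable {M N : ℕ}

lemma right_iff_left_neg (A : Matrix (Fin M × Fin N) (Fin M × Fin N) ℂ) :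
    IsRightEW M N A ↔ IsLeftEW M N (-A) := by
  have key : ∀ σ : Matrix (Fin M × Fin N) (Fin M × Fin N) ℂ,
      (((-A) * σ).trace).re = -(((A * σ).trace).re) := by
    intro σ
    rw [Matrix.neg_mul, Matrix.trace_neg, Complex.neg_re]
  constructor
  · rintro ⟨b, h1, ρ, hρ, h2⟩
    refine ⟨-b, fun σ hσ => ?_, ρ, hρ, ?_⟩
    · rw [key]; linarith [h1 σ hσ]
    · rw [key]; linarith
  · rintro ⟨a, h1, ρ, hρ, h2⟩
    refine ⟨-a, fun σ hσ => ?_, ρ, hρ, ?_⟩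
    · have := h1 σ hσ; rw [key] at this; linarith
    · rw [key] at h2; linarith

lemma cond_transport (hM : 2 ≤ M) (hN : 2 ≤ N) (lam : Fin (M * N) → ℝ)
    (v : Fin (M * N) → (Fin M × Fin N → ℂ)) :
    (∃ k : ℕ, ∃ hk : k + 1 < M * N,
        (∀ z ∈ Submodule.span ℂ
            ((fun i : Fin (M * N) => v i.rev) '' {i : Fin (M * N) | (i : ℕ) ≤ k}),
            IsProdVec M N z → z = 0) ∧
        (fun i : Fin (M * N) => -lam i.rev) ⟨k, Nat.lt_of_succ_lt hk⟩
          < (fun i : Fin (M * N) => -lam i.rev) ⟨k + 1, hk⟩) ↔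
    (∃ l : ℕ, ∃ hl1 : 1 ≤ l, ∃ hl : l < M * N,
        (∀ z ∈ Submodule.span ℂ (v '' {i : Fin (M * N) | l ≤ (i : ℕ)}),
            IsProdVec M N z → z = 0) ∧
        lam ⟨l - 1, lt_of_le_of_lt (Nat.sub_le l 1) hl⟩ < lam ⟨l, hl⟩) := by
  have hrev : ∀ k : ℕ, k + 1 < M * N →
      (Fin.rev '' {i : Fin (M * N) | (i : ℕ) ≤ k})
        = {i : Fin (M * N) | M * N - 1 - k ≤ (i : ℕ)} := by
    intro k hk
    ext j
    constructor
    · rintro ⟨i, hi, rfl⟩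
      simp only [Set.mem_setOf_eq] at hi ⊢
      rw [Fin.val_rev]
      have := i.isLt
      omega
    · intro hj
      simp only [Set.mem_setOf_eq] at hj
      refine ⟨j.rev, ?_, Fin.rev_rev j⟩
      simp only [Set.mem_setOf_eq, Fin.val_rev]
      have := j.isLt
      omega
  have hset : ∀ k : ℕ, k + 1 < M * N →
      ((fun i : Fin (M * N) => v i.rev) '' {i : Fin (M * N) | (i : ℕ) ≤ k})
        = v '' {i : Fin (M * N) | M * N - 1 - k ≤ (i : ℕ)} := by
    intro k hk
    rw [show (fun i : Fin (M * N) => v i.rev) = v ∘ Fin.rev from rfl, Set.image_comp,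
      hrev k hk]
  constructor
  · rintro ⟨k, hk, hsp, hlt⟩
    refine ⟨M * N - 1 - k, by omega, by omega, ?_, ?_⟩
    · intro z hz hp
      refine hsp z ?_ hp
      rw [hset k hk]
      exact hz
    · have hlt' : -lam (⟨k, by omega⟩ : Fin (M * N)).rev
          < -lam (⟨k + 1, hk⟩ : Fin (M * N)).rev := hlt
      rw [neg_lt_neg_iff] at hlt'
      have e1 : (⟨k, by omega⟩ : Fin (M * N)).rev = ⟨M * N - 1 - k, by omega⟩ :=
        Fin.ext (by simp only [Fin.val_rev, Fin.val_mk]; omega)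
      have e2 : (⟨k + 1, hk⟩ : Fin (M * N)).rev = ⟨M * N - 1 - k - 1, by omega⟩ :=
        Fin.ext (by simp only [Fin.val_rev, Fin.val_mk]; omega)
      rw [e1, e2] at hlt'
      exact hlt'
  · rintro ⟨l, hl1, hl, hsp, hlt⟩
    refine ⟨M * N - 1 - l, by omega, ?_, ?_⟩
    · intro z hz hp
      refine hsp z ?_ hp
      rw [hset (M * N - 1 - l) (by omega)] at hz
      have he : M * N - 1 - (M * N - 1 - l) = l := by omega
      rw [he] at hz
      exact hz
    · show -lam (⟨M * N - 1 - l, by omega⟩ : Fin (M * N)).rev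
          < -lam (⟨M * N - 1 - l + 1, by omega⟩ : Fin (M * N)).rev
      rw [neg_lt_neg_iff]
      have e1 : (⟨M * N - 1 - l, by omega⟩ : Fin (M * N)).rev = ⟨l, hl⟩ :=
        Fin.ext (by simp only [Fin.val_rev, Fin.val_mk]; omega)
      have e2 : (⟨M * N - 1 - l + 1, by omega⟩ : Fin (M * N)).rev = ⟨l - 1, by omega⟩ :=
        Fin.ext (by simp only [Fin.val_rev, Fin.val_mk]; omega)
      rw [e1, e2]
      exact hlt

end EWFinal
end

/-- Spectral characterisation of entanglement witnesses: `A` is a left or right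
entanglement witness iff (i) for some `k ≤ MN - 2`, the span of the eigenvectors of the
`k+1` smallest eigenvalues contains no nonzero product vector and `λ_{k+1} > λ_k`, or
(ii) for some `1 ≤ l ≤ MN - 1`, the span of the eigenvectors of the `MN - l` largest
eigenvalues contains no nonzero product vector and `λ_l > λ_{l-1}`. -/
theorem isLeftOrRightEW_iff_spectral (M N : ℕ) (hM : 2 ≤ M) (hN : 2 ≤ N)
    (A : Matrix (Fin M × Fin N) (Fin M × Fin N) ℂ) (hA : A.IsHermitian)
    (lam : Fin (M * N) → ℝ) (hmono : Monotone lam)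
    (v : Fin (M * N) → (Fin M × Fin N → ℂ))
    (horth : ∀ i j, star (v i) ⬝ᵥ v j = if i = j then 1 else 0)
    (heig : ∀ i, A.mulVec (v i) = (lam i : ℂ) • v i) :
    (IsLeftEW M N A ∨ IsRightEW M N A) ↔
      ((∃ k : ℕ, ∃ hk : k + 1 < M * N,
          (∀ z ∈ Submodule.span ℂ (v '' {i : Fin (M * N) | (i : ℕ) ≤ k}),
              IsProdVec M N z → z = 0) ∧
          lam ⟨k, by omega⟩ < lam ⟨k + 1, hk⟩) ∨
       (∃ l : ℕ, ∃ hl1 : 1 ≤ l, ∃ hl : l < M * N,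
          (∀ z ∈ Submodule.span ℂ (v '' {i : Fin (M * N) | l ≤ (i : ℕ)}),
              IsProdVec M N z → z = 0) ∧
          lam ⟨l - 1, by omega⟩ < lam ⟨l, hl⟩)) := by
  classical
  have hL := EWMain.leftEW_iff horth heig hM hN hA hmono
  have horth' : ∀ i j : Fin (M * N),
      star ((fun i : Fin (M * N) => v i.rev) i) ⬝ᵥ (fun i : Fin (M * N) => v i.rev) j
        = if i = j then 1 else 0 := by
    intro i j
    rw [horth]
    simp [Fin.rev_inj]
  have heig' : ∀ i : Fin (M * N),
      (-A).mulVec ((fun i : Fin (M * N) => v i.rev) i)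
        = (((fun i : Fin (M * N) => -lam i.rev) i : ℝ) : ℂ) •
            (fun i : Fin (M * N) => v i.rev) i := by
    intro i
    simp only [Matrix.neg_mulVec, heig, Complex.ofReal_neg, neg_smul]
  have hmono' : Monotone (fun i : Fin (M * N) => -lam i.rev) :=
    fun i j h => neg_le_neg (hmono (Fin.rev_le_rev.mpr h))
  have hR := EWMain.leftEW_iff horth' heig' hM hN hA.neg hmono'
  rw [hL, EWFinal.right_iff_left_neg A, hR]
  exact or_congr Iff.rfl (EWFinal.cond_transport hM hN lam v)

end
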